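/- Suppose K = (k_{ij}) ∈ ℝ^{q×q} is symmetric positive semidefinite and X₀ ∈ ℝ^{n×n} is symmetric positive semidefinite. Let F : [0,T] → ℝ^{n×n} be continuously differentiable with F'(t) = L_A(F(t)) + Π(F(t)) on [0,T] and F(0) = X₀, and assume F(t) is positive semidefinite for every t ∈ [0,T]. Then the constants of the two-sided bound can be chosen nonnegative: there exist c_low, c_up ≥ 0 such that for all t ∈ [0,T], exp(At) X₀ exp(Aᵀt) + c_low · ∫₀ᵗ exp(As) Π(I) exp(Aᵀs) ds ≼ F(t) ≼ exp(At) X₀ exp(Aᵀt) + c_up · ∫₀ᵗ exp(As) Π(I) exp(Aᵀs) ds in the Loewner order; in particular F(t) ≽ exp(At) X₀ exp(Aᵀt) for all t ∈ [0,T]. -/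

import Mathlib

open Matrix MeasureTheory

/-- The matrix exponential over `ℝ`. -/
noncomputable def mexp {ι : Type*} [Fintype ι] [DecidableEq ι] (A : Matrix ι ι ℝ) :
    Matrix ι ι ℝ := NormedSpace.exp A

/-- The Lyapunov operator `L_A(X) = A X + X Aᵀ`. -/
def LyapL {n : ℕ} (A X : Matrix (Fin n) (Fin n) ℝ) : Matrix (Fin n) (Fin n) ℝ :=
  A * X + X * Aᵀ

/-- The operator `Π(X) = Σ_{i,j} k_{ij} N_i X N_jᵀ`. -/
def PiOp {n q : ℕ} (K : Matrix (Fin q) (Fin q) ℝ) (N : Fin q → Matrix (Fin n) (Fin n) ℝ)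
    (X : Matrix (Fin n) (Fin n) ℝ) : Matrix (Fin n) (Fin n) ℝ :=
  ∑ i, ∑ j, K i j • (N i * X * (N j)ᵀ)

/-- Entrywise interval integral of a matrix-valued function. -/
noncomputable def mInt {a b : ℕ} (s t : ℝ) (F : ℝ → Matrix (Fin a) (Fin b) ℝ) :
    Matrix (Fin a) (Fin b) ℝ :=
  Matrix.of fun i j => ∫ u in s..t, F u i j

section helpers
section expderiv
variable {m : ℕ}

theorem mexp_entry_hasDerivAt (A : Matrix (Fin m) (Fin m) ℝ) (t : ℝ) (i j : Fin m) :
    HasDerivAt (fun s => mexp (s • A) i j) ((A * mexp (t • A)) i j) t := by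
  letI : SeminormedRing (Matrix (Fin m) (Fin m) ℝ) := Matrix.linftyOpSemiNormedRing
  letI : NormedRing (Matrix (Fin m) (Fin m) ℝ) := Matrix.linftyOpNormedRing
  letI : NormedAlgebra ℝ (Matrix (Fin m) (Fin m) ℝ) := Matrix.linftyOpNormedAlgebra
  have hd := hasDerivAt_exp_smul_const' (𝕂 := ℝ) A t
  have hb : ∀ M : Matrix (Fin m) (Fin m) ℝ, ‖M i j‖ ≤ 1 * ‖M‖ := by
    intro M
    rw [one_mul, Matrix.linfty_opNorm_def]
    have h1 : ‖M i j‖₊ ≤ ∑ k, ‖M i k‖₊ := Finset.single_le_sum (f := fun k => ‖M i k‖₊) (fun _ _ => zero_le) (Finset.mem_univ j)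
    have h2 : (∑ k, ‖M i k‖₊) ≤ Finset.univ.sup fun i => ∑ j, ‖M i j‖₊ :=
      Finset.le_sup (f := fun i => ∑ j, ‖M i j‖₊) (Finset.mem_univ i)
    exact_mod_cast h1.trans h2
  let e : Matrix (Fin m) (Fin m) ℝ →L[ℝ] ℝ :=
    LinearMap.mkContinuous
      { toFun := fun M => M i j, map_add' := fun _ _ => rfl, map_smul' := fun _ _ => rfl } 1 hb
  have := (e.hasFDerivAt.comp_hasDerivAt t hd)
  exact this

variable {m : ℕ}

theorem mexp_zero_smul (A : Matrix (Fin m) (Fin m) ℝ) : mexp ((0:ℝ) • A) = 1 := by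
  rw [mexp, zero_smul, NormedSpace.exp_zero]

theorem mexp_add_smul (A : Matrix (Fin m) (Fin m) ℝ) (s t : ℝ) :
    mexp ((s + t) • A) = mexp (s • A) * mexp (t • A) := by
  rw [mexp, mexp, mexp, add_smul]
  exact Matrix.exp_add_of_commute _ _ (Commute.smul_left (Commute.smul_right rfl t) s)

theorem mexp_neg_mul (A : Matrix (Fin m) (Fin m) ℝ) (t : ℝ) :
    mexp (t • A) * mexp ((-t) • A) = 1 := by
  rw [← mexp_add_smul, add_neg_cancel, mexp_zero_smul]

theorem mexp_neg_mul' (A : Matrix (Fin m) (Fin m) ℝ) (t : ℝ) :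
    mexp ((-t) • A) * mexp (t • A) = 1 := by
  rw [← mexp_add_smul, neg_add_cancel, mexp_zero_smul]

theorem mexp_transpose (A : Matrix (Fin m) (Fin m) ℝ) (t : ℝ) :
    (mexp (t • A))ᵀ = mexp (t • Aᵀ) := by
  rw [mexp, mexp, ← Matrix.exp_transpose, Matrix.transpose_smul]

theorem mexp_commute (A : Matrix (Fin m) (Fin m) ℝ) (t : ℝ) :
    A * mexp (t • A) = mexp (t • A) * A := by
  letI : SeminormedRing (Matrix (Fin m) (Fin m) ℝ) := Matrix.linftyOpSemiNormedRing
  letI : NormedRing (Matrix (Fin m) (Fin m) ℝ) := Matrix.linftyOpNormedRing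
  letI : NormedAlgebra ℝ (Matrix (Fin m) (Fin m) ℝ) := Matrix.linftyOpNormedAlgebra
  have h : Commute A (t • A) := Commute.smul_right rfl t
  exact h.exp_right.eq
variable {n q : ℕ}

theorem quad_sum {ι : Type*} (s : Finset ι) (f : ι → Matrix (Fin n) (Fin n) ℝ) (x : Fin n → ℝ) :
    x ⬝ᵥ ((∑ i ∈ s, f i) *ᵥ x) = ∑ i ∈ s, x ⬝ᵥ (f i *ᵥ x) := by
  induction s using Finset.cons_induction with
  | empty => simp [Matrix.zero_mulVec]
  | cons i s hi ih => simp [Matrix.add_mulVec, dotProduct_add, ih]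

theorem quad_smul (c : ℝ) (M : Matrix (Fin n) (Fin n) ℝ) (x : Fin n → ℝ) :
    x ⬝ᵥ ((c • M) *ᵥ x) = c * (x ⬝ᵥ (M *ᵥ x)) := by
  rw [Matrix.smul_mulVec, dotProduct_smul, smul_eq_mul]

theorem quad_sub (M P : Matrix (Fin n) (Fin n) ℝ) (x : Fin n → ℝ) :
    x ⬝ᵥ ((M - P) *ᵥ x) = x ⬝ᵥ (M *ᵥ x) - x ⬝ᵥ (P *ᵥ x) := by
  rw [Matrix.sub_mulVec, dotProduct_sub]

theorem quad_add (M P : Matrix (Fin n) (Fin n) ℝ) (x : Fin n → ℝ) :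
    x ⬝ᵥ ((M + P) *ᵥ x) = x ⬝ᵥ (M *ᵥ x) + x ⬝ᵥ (P *ᵥ x) := by
  rw [Matrix.add_mulVec, dotProduct_add]

theorem dot_conj (P Z Q : Matrix (Fin n) (Fin n) ℝ) (x y : Fin n → ℝ) :
    x ⬝ᵥ ((P * Z * Q) *ᵥ y) = (Pᵀ *ᵥ x) ⬝ᵥ (Z *ᵥ (Q *ᵥ y)) := by
  rw [← Matrix.mulVec_mulVec, ← Matrix.mulVec_mulVec, Matrix.dotProduct_mulVec,
    ← Matrix.mulVec_transpose]

open scoped MatrixOrder in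
theorem psd_eq_star_mul {Y : Matrix (Fin n) (Fin n) ℝ} (hY : Y.PosSemidef) :
    ∃ B : Matrix (Fin n) (Fin n) ℝ, Y = Bᴴ * B := by
  obtain ⟨B, hB⟩ := CStarAlgebra.nonneg_iff_eq_star_mul_self.mp hY.nonneg
  exact ⟨B, hB⟩

theorem quad_le_trace {Y : Matrix (Fin n) (Fin n) ℝ} (hY : Y.PosSemidef) (x : Fin n → ℝ) :
    x ⬝ᵥ (Y *ᵥ x) ≤ Y.trace * (x ⬝ᵥ x) := by
  obtain ⟨B, rfl⟩ := psd_eq_star_mul hY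
  have hBt : (Bᴴ : Matrix (Fin n) (Fin n) ℝ) = Bᵀ := by
    ext i j; simp [Matrix.conjTranspose_apply]
  rw [hBt]
  have h1 : x ⬝ᵥ ((Bᵀ * B) *ᵥ x) = (B *ᵥ x) ⬝ᵥ (B *ᵥ x) := by
    rw [← Matrix.mulVec_mulVec, Matrix.dotProduct_mulVec, ← Matrix.mulVec_transpose,
      Matrix.transpose_transpose]
  rw [h1]
  have h2 : (Bᵀ * B).trace = ∑ i, ∑ j, (B i j)^2 := by
    simp [Matrix.trace, Matrix.diag, Matrix.mul_apply, sq]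
    exact Finset.sum_comm
  rw [h2, Finset.sum_mul]
  unfold dotProduct Matrix.mulVec
  refine Finset.sum_le_sum fun i _ => ?_
  have := Finset.sum_mul_sq_le_sq_mul_sq Finset.univ (fun j => B i j) x
  calc (B i ⬝ᵥ x) * (B i ⬝ᵥ x) = (∑ j, B i j * x j)^2 := by rw [sq]; rfl
    _ ≤ (∑ j, (B i j)^2) * ∑ j, (x j)^2 := this
    _ = (∑ j, B i j ^ 2) * ∑ j, x j * x j := by simp [sq]

theorem sum_rearrange (K : Matrix (Fin q) (Fin q) ℝ) (w : Fin q → Fin n → ℝ) :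
    ∑ i, ∑ j, K i j * (w i ⬝ᵥ w j) = ∑ c, (fun i => w i c) ⬝ᵥ (K *ᵥ fun i => w i c) := by
  simp only [dotProduct, Matrix.mulVec, Finset.mul_sum]
  calc ∑ i, ∑ j, ∑ c, K i j * (w i c * w j c)
      = ∑ i, ∑ c, ∑ j, K i j * (w i c * w j c) :=
        Finset.sum_congr rfl fun i _ => Finset.sum_comm
    _ = ∑ c, ∑ i, ∑ j, K i j * (w i c * w j c) := Finset.sum_comm
    _ = _ := by
        refine Finset.sum_congr rfl fun c _ => Finset.sum_congr rfl fun i _ => ?_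
        exact Finset.sum_congr rfl fun j _ => by ring

theorem PiOp_quad_nonneg {K : Matrix (Fin q) (Fin q) ℝ} (hK : K.PosSemidef)
    (N : Fin q → Matrix (Fin n) (Fin n) ℝ) {Z : Matrix (Fin n) (Fin n) ℝ}
    (hZ : Z.PosSemidef) (x : Fin n → ℝ) : 0 ≤ x ⬝ᵥ (PiOp K N Z *ᵥ x) := by
  obtain ⟨B, rfl⟩ := psd_eq_star_mul hZ
  have hBt : (Bᴴ : Matrix (Fin n) (Fin n) ℝ) = Bᵀ := by
    ext i j; simp [Matrix.conjTranspose_apply]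
  rw [hBt]
  have key : ∀ i j, x ⬝ᵥ ((N i * (Bᵀ * B) * (N j)ᵀ) *ᵥ x)
      = (B *ᵥ ((N i)ᵀ *ᵥ x)) ⬝ᵥ (B *ᵥ ((N j)ᵀ *ᵥ x)) := by
    intro i j
    rw [show N i * (Bᵀ * B) * (N j)ᵀ = (N i * Bᵀ) * B * (N j)ᵀ by
      rw [← Matrix.mul_assoc (N i) Bᵀ B], dot_conj]
    simp [Matrix.transpose_mul, Matrix.transpose_transpose, ← Matrix.mulVec_mulVec]
  have expand : x ⬝ᵥ (PiOp K N (Bᵀ * B) *ᵥ x)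
      = ∑ i, ∑ j, K i j * ((B *ᵥ ((N i)ᵀ *ᵥ x)) ⬝ᵥ (B *ᵥ ((N j)ᵀ *ᵥ x))) := by
    rw [PiOp, quad_sum]
    refine Finset.sum_congr rfl fun i _ => ?_
    rw [quad_sum]
    exact Finset.sum_congr rfl fun j _ => by rw [quad_smul, key]
  rw [expand, sum_rearrange]
  refine Finset.sum_nonneg fun c _ => ?_
  simpa using hK.dotProduct_mulVec_nonneg (fun i => (B *ᵥ ((N i)ᵀ *ᵥ x)) c)

theorem realHermitian {M : Matrix (Fin n) (Fin n) ℝ} (h : Mᵀ = M) : M.IsHermitian := by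
  have : Mᴴ = Mᵀ := by ext i j; simp [Matrix.conjTranspose_apply]
  exact this.trans h

theorem makePSD {M : Matrix (Fin n) (Fin n) ℝ} (h1 : Mᵀ = M)
    (h2 : ∀ x, 0 ≤ x ⬝ᵥ (M *ᵥ x)) : M.PosSemidef :=
  .of_dotProduct_mulVec_nonneg (realHermitian h1) fun x => by simpa using h2 x

theorem psd_quad {M : Matrix (Fin n) (Fin n) ℝ} (h : M.PosSemidef) (x : Fin n → ℝ) :
    0 ≤ x ⬝ᵥ (M *ᵥ x) := by simpa using h.dotProduct_mulVec_nonneg x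

theorem psd_transpose_eq {M : Matrix (Fin n) (Fin n) ℝ} (h : M.PosSemidef) : Mᵀ = M := by
  have := h.1
  rw [Matrix.IsHermitian] at this
  have h2 : Mᴴ = Mᵀ := by ext i j; simp [Matrix.conjTranspose_apply]
  rw [← h2, this]

theorem PiOp_transpose (K : Matrix (Fin q) (Fin q) ℝ) (hK : Kᵀ = K)
    (N : Fin q → Matrix (Fin n) (Fin n) ℝ) (Z : Matrix (Fin n) (Fin n) ℝ) (hZ : Zᵀ = Z) :
    (PiOp K N Z)ᵀ = PiOp K N Z := by
  have hE : ∀ i j : Fin q, K j i = K i j := fun i j => by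
    conv_rhs => rw [← hK]
    rfl
  rw [PiOp, Matrix.transpose_sum]
  calc ∑ i, (∑ j, K i j • (N i * Z * (N j)ᵀ))ᵀ
      = ∑ i, ∑ j, K i j • (N j * Z * (N i)ᵀ) := by
        refine Finset.sum_congr rfl fun i _ => ?_
        rw [Matrix.transpose_sum]
        refine Finset.sum_congr rfl fun j _ => ?_
        rw [Matrix.transpose_smul, Matrix.transpose_mul, Matrix.transpose_mul,
          Matrix.transpose_transpose, hZ, Matrix.mul_assoc]
    _ = ∑ j, ∑ i, K i j • (N j * Z * (N i)ᵀ) := Finset.sum_comm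
    _ = PiOp K N Z := by
        rw [PiOp]
        exact Finset.sum_congr rfl fun i _ => Finset.sum_congr rfl fun j _ => by rw [hE]

theorem PiOp_sub (K : Matrix (Fin q) (Fin q) ℝ) (N : Fin q → Matrix (Fin n) (Fin n) ℝ)
    (X Y : Matrix (Fin n) (Fin n) ℝ) :
    PiOp K N (X - Y) = PiOp K N X - PiOp K N Y := by
  simp only [PiOp, Matrix.mul_sub, Matrix.sub_mul, smul_sub, Finset.sum_sub_distrib]

theorem PiOp_smul (K : Matrix (Fin q) (Fin q) ℝ) (N : Fin q → Matrix (Fin n) (Fin n) ℝ)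
    (c : ℝ) (X : Matrix (Fin n) (Fin n) ℝ) :
    PiOp K N (c • X) = c • PiOp K N X := by
  simp only [PiOp, Finset.smul_sum]
  refine Finset.sum_congr rfl fun i _ => Finset.sum_congr rfl fun j _ => ?_
  rw [Matrix.mul_smul, Matrix.smul_mul, smul_comm]

theorem hasDerivAt_matrix_mul {P Q : ℝ → Matrix (Fin n) (Fin n) ℝ}
    {P' Q' : Matrix (Fin n) (Fin n) ℝ} {t : ℝ}
    (hP : ∀ i j, HasDerivAt (fun s => P s i j) (P' i j) t)
    (hQ : ∀ i j, HasDerivAt (fun s => Q s i j) (Q' i j) t) :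
    ∀ i j, HasDerivAt (fun s => (P s * Q s) i j) ((P' * Q t + P t * Q') i j) t := by
  intro i j
  have h : HasDerivAt (fun s => ∑ k, P s i k * Q s k j)
      (∑ k, (P' i k * Q t k j + P t i k * Q' k j)) t :=
    HasDerivAt.fun_sum fun k _ => (hP i k).mul (hQ k j)
  simpa [Matrix.mul_apply, Matrix.add_apply, Finset.sum_add_distrib] using h

theorem hasDerivAt_quad {M : ℝ → Matrix (Fin n) (Fin n) ℝ} {M' : Matrix (Fin n) (Fin n) ℝ}
    {t : ℝ} (h : ∀ i j, HasDerivAt (fun s => M s i j) (M' i j) t) (x : Fin n → ℝ) :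
    HasDerivAt (fun s => x ⬝ᵥ (M s *ᵥ x)) (x ⬝ᵥ (M' *ᵥ x)) t := by
  have hh : HasDerivAt (fun s => ∑ a, ∑ b, x a * (M s a b * x b))
      (∑ a, ∑ b, x a * (M' a b * x b)) t :=
    HasDerivAt.fun_sum fun a _ => HasDerivAt.fun_sum fun b _ =>
      (((h a b).mul_const (x b)).const_mul (x a))
  simpa [dotProduct, Matrix.mulVec, Finset.mul_sum] using hh
section deriv2
variable {n : ℕ}

theorem mexp_neg_entry_hasDerivAt (A : Matrix (Fin n) (Fin n) ℝ) (t : ℝ) (i j : Fin n) :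
    HasDerivAt (fun s => mexp ((-s) • A) i j) ((-(A * mexp ((-t) • A))) i j) t := by
  have h1 := mexp_entry_hasDerivAt A (-t) i j
  have h2 : HasDerivAt (fun s : ℝ => -s) (-1) t := hasDerivAt_neg t
  have h3 := HasDerivAt.comp t h1 h2
  have h4 : (fun s => mexp (s • A) i j) ∘ Neg.neg = fun s : ℝ => mexp ((-s) • A) i j := rfl
  rw [h4] at h3
  simpa [Matrix.neg_apply, mul_comm, neg_smul] using h3

theorem mexp_entry_continuous (A : Matrix (Fin n) (Fin n) ℝ) (i j : Fin n) :
    Continuous fun s : ℝ => mexp (s • A) i j :=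
  continuous_iff_continuousAt.mpr fun t => (mexp_entry_hasDerivAt A t i j).continuousAt

end deriv2
theorem le_start_of_deriv_nonpos {φ φ' : ℝ → ℝ} {T : ℝ}
    (hd : ∀ s ∈ Set.Icc (0:ℝ) T, HasDerivAt φ (φ' s) s)
    (h0 : ∀ s ∈ Set.Icc (0:ℝ) T, φ' s ≤ 0) {t : ℝ} (ht : t ∈ Set.Icc (0:ℝ) T) :
    φ t ≤ φ 0 := by
  have hmono : AntitoneOn φ (Set.Icc 0 T) := by
    apply antitoneOn_of_deriv_nonpos (convex_Icc 0 T)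
    · exact fun s hs => (hd s hs).continuousAt.continuousWithinAt
    · intro s hs
      rw [interior_Icc] at hs
      exact ((hd s (Set.mem_Icc_of_Ioo hs)).differentiableAt).differentiableWithinAt
    · intro s hs
      rw [interior_Icc] at hs
      rw [(hd s (Set.mem_Icc_of_Ioo hs)).deriv]
      exact h0 s (Set.mem_Icc_of_Ioo hs)
  exact hmono (Set.left_mem_Icc.mpr (le_trans ht.1 ht.2)) ht ht.1

theorem start_le_of_deriv_nonneg {φ φ' : ℝ → ℝ} {T : ℝ}
    (hd : ∀ s ∈ Set.Icc (0:ℝ) T, HasDerivAt φ (φ' s) s)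
    (h0 : ∀ s ∈ Set.Icc (0:ℝ) T, 0 ≤ φ' s) {t : ℝ} (ht : t ∈ Set.Icc (0:ℝ) T) :
    φ 0 ≤ φ t := by
  have := le_start_of_deriv_nonpos (φ := fun s => -φ s) (φ' := fun s => -φ' s)
    (fun s hs => (hd s hs).neg) (fun s hs => neg_nonpos.mpr (h0 s hs)) ht
  have h2 : -φ t ≤ -φ 0 := this
  linarith

theorem cont_mul_entry {P Q : ℝ → Matrix (Fin n) (Fin n) ℝ}
    (hP : ∀ i j, Continuous fun s => P s i j) (hQ : ∀ i j, Continuous fun s => Q s i j) :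
    ∀ i j, Continuous fun s => (P s * Q s) i j := by
  intro i j
  have : (fun s => (P s * Q s) i j) = fun s => ∑ k, P s i k * Q s k j := by
    funext s; simp [Matrix.mul_apply]
  rw [this]
  exact continuous_finset_sum _ fun k _ => (hP i k).mul (hQ k j)

theorem cont_quad {M : ℝ → Matrix (Fin n) (Fin n) ℝ}
    (h : ∀ i j, Continuous fun s => M s i j) (x : Fin n → ℝ) :
    Continuous fun s => x ⬝ᵥ (M s *ᵥ x) := by
  have : (fun s => x ⬝ᵥ (M s *ᵥ x)) = fun s => ∑ a, ∑ b, x a * (M s a b * x b) := by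
    funext s; simp [dotProduct, Matrix.mulVec, Finset.mul_sum]
  rw [this]
  exact continuous_finset_sum _ fun a _ => continuous_finset_sum _ fun b _ =>
    (continuous_const.mul ((h a b).mul continuous_const))

theorem integral_hasDerivAt_of_continuous {f : ℝ → ℝ} (hf : Continuous f) (t : ℝ) :
    HasDerivAt (fun s => ∫ u in (0:ℝ)..s, f u) (f t) t :=
  intervalIntegral.integral_hasDerivAt_right (hf.intervalIntegrable _ _)
    (hf.stronglyMeasurableAtFilter _ _) hf.continuousAt

theorem quad_mInt {f : ℝ → Matrix (Fin n) (Fin n) ℝ} {t : ℝ}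
    (hf : ∀ i j, Continuous fun u => f u i j) (x : Fin n → ℝ) :
    x ⬝ᵥ (mInt 0 t f *ᵥ x) = ∫ u in (0:ℝ)..t, x ⬝ᵥ (f u *ᵥ x) := by
  have h1 : ∀ u, x ⬝ᵥ (f u *ᵥ x) = ∑ a, ∑ b, x a * (f u a b * x b) := by
    intro u; simp [dotProduct, Matrix.mulVec, Finset.mul_sum]
  have h2 : x ⬝ᵥ (mInt 0 t f *ᵥ x) = ∑ a, ∑ b, x a * ((∫ u in (0:ℝ)..t, f u a b) * x b) := by
    simp [dotProduct, Matrix.mulVec, Finset.mul_sum, mInt]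
  rw [h2]
  have h3 : ∀ a b : Fin n, x a * ((∫ u in (0:ℝ)..t, f u a b) * x b)
      = ∫ u in (0:ℝ)..t, x a * (f u a b * x b) := by
    intro a b
    rw [← intervalIntegral.integral_mul_const, ← intervalIntegral.integral_const_mul]
  simp only [h3]
  have hInt : ∀ a b : Fin n, IntervalIntegrable (fun u => x a * (f u a b * x b)) volume 0 t :=
    fun a b => (continuous_const.mul ((hf a b).mul continuous_const)).intervalIntegrable _ _
  have step1 : ∀ a : Fin n, (∑ b, ∫ u in (0:ℝ)..t, x a * (f u a b * x b))
      = ∫ u in (0:ℝ)..t, ∑ b, x a * (f u a b * x b) :=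
    fun a => (intervalIntegral.integral_finset_sum fun b _ => hInt a b).symm
  simp only [step1]
  rw [← intervalIntegral.integral_finset_sum]
  · simp only [h1]
  · intro a _
    exact (continuous_finset_sum _ fun b _ =>
      continuous_const.mul ((hf a b).mul continuous_const)).intervalIntegrable _ _

end expderiv

section mainhelp
variable {n q : ℕ}

theorem conjT_real {a b : ℕ} (M : Matrix (Fin a) (Fin b) ℝ) : Mᴴ = Mᵀ := by
  ext i j; simp [Matrix.conjTranspose_apply]

theorem mexp_neg_entry_continuous (A : Matrix (Fin n) (Fin n) ℝ) (i j : Fin n) :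
    Continuous fun s : ℝ => mexp ((-s) • A) i j :=
  (mexp_entry_continuous A i j).comp continuous_neg

theorem dot_self_nonneg (x : Fin n → ℝ) : 0 ≤ x ⬝ᵥ x :=
  Finset.sum_nonneg fun i _ => mul_self_nonneg (x i)

end mainhelp

set_option maxHeartbeats 2000000 in
/-- **Refinement of Theorem 4.1.** If `K` and `X₀` are positive semidefinite, `F` solves
`F' = L_A(F) + Π(F)` on `[0,T]` with `F(0) = X₀`, and `F(t)` is positive semidefinite on
`[0,T]`, then the two-sided Loewner bound of Theorem 4.1 holds with nonnegative constants
`c_low, c_up ≥ 0`; in particular `F(t) ≽ exp(At) X₀ exp(Aᵀt)` for all `t ∈ [0,T]`. -/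
theorem thm_4_1_nonneg_constants {n q : ℕ} (T : ℝ) (hT : 0 < T)
    (A : Matrix (Fin n) (Fin n) ℝ) (N : Fin q → Matrix (Fin n) (Fin n) ℝ)
    (K : Matrix (Fin q) (Fin q) ℝ) (hK : K.PosSemidef)
    (X₀ : Matrix (Fin n) (Fin n) ℝ) (hX₀ : X₀.PosSemidef)
    (F : ℝ → Matrix (Fin n) (Fin n) ℝ) (hF0 : F 0 = X₀)
    (hF : ∀ t ∈ Set.Icc (0:ℝ) T, ∀ i j,
      HasDerivAt (fun s => F s i j) ((LyapL A (F t) + PiOp K N (F t)) i j) t)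
    (hFpsd : ∀ t ∈ Set.Icc (0:ℝ) T, (F t).PosSemidef) :
    (∃ cLow cUp : ℝ, 0 ≤ cLow ∧ 0 ≤ cUp ∧ ∀ t ∈ Set.Icc (0:ℝ) T,
      (F t - (mexp (t • A) * X₀ * mexp (t • Aᵀ) +
        cLow • mInt 0 t (fun s => mexp (s • A) * PiOp K N 1 * mexp (s • Aᵀ)))).PosSemidef ∧
      ((mexp (t • A) * X₀ * mexp (t • Aᵀ) +
        cUp • mInt 0 t (fun s => mexp (s • A) * PiOp K N 1 * mexp (s • Aᵀ))) -
          F t).PosSemidef) ∧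
    ∀ t ∈ Set.Icc (0:ℝ) T,
      (F t - mexp (t • A) * X₀ * mexp (t • Aᵀ)).PosSemidef := by
  classical
  have hKt : Kᵀ = K := (conjT_real K).symm.trans hK.1
  set Pi1 : Matrix (Fin n) (Fin n) ℝ := PiOp K N 1 with hPi1def
  have hPi1t : Pi1ᵀ = Pi1 := PiOp_transpose K hKt N 1 Matrix.transpose_one
  set f : ℝ → Matrix (Fin n) (Fin n) ℝ := fun s => mexp (s • A) * Pi1 * mexp (s • Aᵀ)
    with hfdef
  have hfc : ∀ i j, Continuous fun s => f s i j :=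
    cont_mul_entry (cont_mul_entry (mexp_entry_continuous A) fun i j => continuous_const)
      (mexp_entry_continuous Aᵀ)
  have hfsym : ∀ s, (f s)ᵀ = f s := by
    intro s
    rw [hfdef]
    simp only [Matrix.transpose_mul, hPi1t, ← mexp_transpose, Matrix.transpose_transpose]
    rw [Matrix.mul_assoc]
  -- the trace bound
  have htrc : ContinuousOn (fun s => (F s).trace) (Set.Icc 0 T) := by
    intro s hs
    have hder : HasDerivAt (fun u => ∑ i, F u i i)
        (∑ i, (LyapL A (F s) + PiOp K N (F s)) i i) s :=
      HasDerivAt.fun_sum fun i _ => hF s hs i i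
    have : ContinuousAt (fun u => (F u).trace) s := by
      have heq : (fun u => (F u).trace) = fun u => ∑ i, F u i i := by
        funext u; simp [Matrix.trace, Matrix.diag]
      rw [heq]; exact hder.continuousAt
    exact this.continuousWithinAt
  obtain ⟨s₀, hs₀, hmax'⟩ := isCompact_Icc.exists_isMaxOn
    ⟨0, Set.left_mem_Icc.mpr hT.le⟩ htrc
  have hmax : ∀ s ∈ Set.Icc (0:ℝ) T, (F s).trace ≤ (F s₀).trace := fun s hs => hmax' hs
  set Mc : ℝ := max ((F s₀).trace) 0 with hMcdef
  have hMc0 : 0 ≤ Mc := le_max_right _ _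
  have hFleMc : ∀ s ∈ Set.Icc (0:ℝ) T, ∀ x : Fin n → ℝ,
      x ⬝ᵥ (F s *ᵥ x) ≤ Mc * (x ⬝ᵥ x) := by
    intro s hs x
    calc x ⬝ᵥ (F s *ᵥ x) ≤ (F s).trace * (x ⬝ᵥ x) := quad_le_trace (hFpsd s hs) x
      _ ≤ Mc * (x ⬝ᵥ x) :=
        mul_le_mul_of_nonneg_right ((hmax s hs).trans (le_max_left _ _)) (dot_self_nonneg x)
  -- psd of `Mc • 1 - F s`
  have hMcF : ∀ s ∈ Set.Icc (0:ℝ) T, (Mc • (1 : Matrix (Fin n) (Fin n) ℝ) - F s).PosSemidef := by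
    intro s hs
    refine makePSD ?_ fun x => ?_
    · rw [Matrix.transpose_sub, Matrix.transpose_smul, Matrix.transpose_one,
        psd_transpose_eq (hFpsd s hs)]
    · rw [quad_sub, quad_smul]
      have : x ⬝ᵥ ((1 : Matrix (Fin n) (Fin n) ℝ) *ᵥ x) = x ⬝ᵥ x := by
        rw [Matrix.one_mulVec]
      rw [this]
      have := hFleMc s hs x
      linarith
  -- conjugated psd
  have hconj : ∀ (t : ℝ) (Z : Matrix (Fin n) (Fin n) ℝ), Z.PosSemidef →
      (mexp ((-t) • A) * (Z * mexp ((-t) • Aᵀ))).PosSemidef := by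
    intro t Z hZ
    have h1 := hZ.mul_mul_conjTranspose_same (mexp ((-t) • A))
    rw [conjT_real, mexp_transpose, Matrix.mul_assoc] at h1
    exact h1
  -- the auxiliary function G
  set G : ℝ → Matrix (Fin n) (Fin n) ℝ :=
    fun s => mexp ((-s) • A) * (F s * mexp ((-s) • Aᵀ)) with hGdef
  have hG0 : G 0 = X₀ := by
    rw [hGdef]
    simp only [neg_zero, mexp_zero_smul, hF0, Matrix.one_mul, Matrix.mul_one]
  have hGd : ∀ t ∈ Set.Icc (0:ℝ) T, ∀ i j, HasDerivAt (fun s => G s i j)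
      ((mexp ((-t) • A) * (PiOp K N (F t) * mexp ((-t) • Aᵀ))) i j) t := by
    intro t ht
    have hQ := hasDerivAt_matrix_mul (hF t ht) (mexp_neg_entry_hasDerivAt Aᵀ t)
    have hGd' := hasDerivAt_matrix_mul (mexp_neg_entry_hasDerivAt A t) hQ
    have halg : -(A * mexp ((-t) • A)) * (F t * mexp ((-t) • Aᵀ)) +
        mexp ((-t) • A) * ((LyapL A (F t) + PiOp K N (F t)) * mexp ((-t) • Aᵀ) +
          F t * -(Aᵀ * mexp ((-t) • Aᵀ))) =
        mexp ((-t) • A) * (PiOp K N (F t) * mexp ((-t) • Aᵀ)) := by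
      have hc : mexp ((-t) • A) * A = A * mexp ((-t) • A) := (mexp_commute A (-t)).symm
      simp only [LyapL, Matrix.add_mul, Matrix.mul_add, Matrix.neg_mul, Matrix.mul_neg,
        ← Matrix.mul_assoc, hc]
      abel
    intro i j
    have h' := hGd' i j
    rw [halg] at h'
    exact h'
  -- the key pointwise estimate
  have key : ∀ t ∈ Set.Icc (0:ℝ) T, ∀ y : Fin n → ℝ,
      y ⬝ᵥ ((mexp (t • A) * X₀ * mexp (t • Aᵀ)) *ᵥ y) ≤ y ⬝ᵥ (F t *ᵥ y) ∧
      y ⬝ᵥ (F t *ᵥ y) ≤ y ⬝ᵥ ((mexp (t • A) * X₀ * mexp (t • Aᵀ)) *ᵥ y) +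
        Mc * (y ⬝ᵥ (mInt 0 t f *ᵥ y)) := by
    intro t ht y
    set x : Fin n → ℝ := mexp (t • Aᵀ) *ᵥ y with hxdef
    set g : ℝ → ℝ := fun s => x ⬝ᵥ (G s *ᵥ x) with hgdef
    set p : ℝ → ℝ :=
      fun s => x ⬝ᵥ ((mexp ((-s) • A) * (PiOp K N (F s) * mexp ((-s) • Aᵀ))) *ᵥ x) with hpdef
    set qq : ℝ → ℝ :=
      fun s => x ⬝ᵥ ((mexp ((-s) • A) * (Pi1 * mexp ((-s) • Aᵀ))) *ᵥ x) with hqqdef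
    have hgd : ∀ s ∈ Set.Icc (0:ℝ) T, HasDerivAt g (p s) s :=
      fun s hs => hasDerivAt_quad (hGd s hs) x
    have hp0 : ∀ s ∈ Set.Icc (0:ℝ) T, 0 ≤ p s := by
      intro s hs
      refine psd_quad (hconj s _ ?_) x
      refine makePSD (PiOp_transpose K hKt N _ (psd_transpose_eq (hFpsd s hs))) fun z => ?_
      exact PiOp_quad_nonneg hK N (hFpsd s hs) z
    have hpq : ∀ s ∈ Set.Icc (0:ℝ) T, p s ≤ Mc * qq s := by
      intro s hs
      have hpsd := psd_quad (hconj s _ (makePSD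
        (PiOp_transpose K hKt N _ (by
          rw [Matrix.transpose_sub, Matrix.transpose_smul, Matrix.transpose_one,
            psd_transpose_eq (hFpsd s hs)]))
        fun z => PiOp_quad_nonneg hK N (hMcF s hs) z)) x
      have hexp : mexp ((-s) • A) * (PiOp K N (Mc • 1 - F s) * mexp ((-s) • Aᵀ)) =
          Mc • (mexp ((-s) • A) * (Pi1 * mexp ((-s) • Aᵀ))) -
            mexp ((-s) • A) * (PiOp K N (F s) * mexp ((-s) • Aᵀ)) := by
        rw [PiOp_sub, PiOp_smul, hPi1def, Matrix.sub_mul, Matrix.mul_sub, Matrix.smul_mul,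
          Matrix.mul_smul]
      rw [hexp, quad_sub, quad_smul] at hpsd
      rw [hpdef, hqqdef]
      linarith
    have hqqc : Continuous qq := by
      rw [hqqdef]
      exact cont_quad (M := fun s => mexp ((-s) • A) * (Pi1 * mexp ((-s) • Aᵀ)))
        (cont_mul_entry (P := fun s => mexp ((-s) • A)) (Q := fun s => Pi1 * mexp ((-s) • Aᵀ))
          (mexp_neg_entry_continuous A)
          (cont_mul_entry (P := fun _ => Pi1) (Q := fun s => mexp ((-s) • Aᵀ))
            (fun i j => continuous_const) (mexp_neg_entry_continuous Aᵀ))) x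
    have hφd : ∀ s ∈ Set.Icc (0:ℝ) T,
        HasDerivAt (fun u => g u - Mc * ∫ v in (0:ℝ)..u, qq v) (p s - Mc * qq s) s :=
      fun s hs => (hgd s hs).sub ((integral_hasDerivAt_of_continuous hqqc s).const_mul Mc)
    have hup : g t - Mc * ∫ v in (0:ℝ)..t, qq v ≤ g 0 - Mc * ∫ v in (0:ℝ)..(0:ℝ), qq v :=
      le_start_of_deriv_nonpos hφd
        (fun s hs => by have := hpq s hs; linarith) ht
    have hlow : g 0 ≤ g t := start_le_of_deriv_nonneg hgd hp0 ht
    rw [intervalIntegral.integral_same] at hup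
    -- identities
    have hgt : g t = y ⬝ᵥ (F t *ᵥ y) := by
      have h1 : mexp (t • A) * G t * (mexp (t • A))ᵀ = F t := by
        rw [mexp_transpose, hGdef]
        calc mexp (t • A) * (mexp ((-t) • A) * (F t * mexp ((-t) • Aᵀ))) * mexp (t • Aᵀ)
            = (mexp (t • A) * mexp ((-t) • A)) * (F t * (mexp ((-t) • Aᵀ) * mexp (t • Aᵀ))) := by
              simp only [Matrix.mul_assoc]
          _ = F t := by rw [mexp_neg_mul, mexp_neg_mul', Matrix.one_mul, Matrix.mul_one]
      calc g t = (mexp (t • A))ᵀ *ᵥ y ⬝ᵥ (G t *ᵥ ((mexp (t • A))ᵀ *ᵥ y)) := by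
            rw [hgdef, hxdef, mexp_transpose]
        _ = y ⬝ᵥ ((mexp (t • A) * G t * (mexp (t • A))ᵀ) *ᵥ y) := (dot_conj _ _ _ _ _).symm
        _ = y ⬝ᵥ (F t *ᵥ y) := by rw [h1]
    have hg0 : g 0 = y ⬝ᵥ ((mexp (t • A) * X₀ * mexp (t • Aᵀ)) *ᵥ y) := by
      calc g 0 = (mexp (t • A))ᵀ *ᵥ y ⬝ᵥ (X₀ *ᵥ ((mexp (t • A))ᵀ *ᵥ y)) := by
            show x ⬝ᵥ (G 0 *ᵥ x) = _
            rw [hG0, mexp_transpose, ← hxdef]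
        _ = y ⬝ᵥ ((mexp (t • A) * X₀ * (mexp (t • A))ᵀ) *ᵥ y) := (dot_conj _ _ _ _ _).symm
        _ = _ := by rw [mexp_transpose]
    have hint : (∫ v in (0:ℝ)..t, qq v) = y ⬝ᵥ (mInt 0 t f *ᵥ y) := by
      have hqr : ∀ s : ℝ, qq s = y ⬝ᵥ (f (t - s) *ᵥ y) := by
        intro s
        have h2 : mexp (t • A) * (mexp ((-s) • A) * (Pi1 * mexp ((-s) • Aᵀ))) *
            (mexp (t • A))ᵀ = f (t - s) := by
          rw [mexp_transpose, hfdef]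
          calc mexp (t • A) * (mexp ((-s) • A) * (Pi1 * mexp ((-s) • Aᵀ))) * mexp (t • Aᵀ)
              = (mexp (t • A) * mexp ((-s) • A)) * Pi1 *
                  (mexp ((-s) • Aᵀ) * mexp (t • Aᵀ)) := by
                simp only [Matrix.mul_assoc]
            _ = mexp ((t - s) • A) * Pi1 * mexp ((t - s) • Aᵀ) := by
                rw [← mexp_add_smul, ← mexp_add_smul]
                rw [show t + -s = t - s by ring, show -s + t = t - s by ring]
        calc qq s = (mexp (t • A))ᵀ *ᵥ y ⬝ᵥ
              ((mexp ((-s) • A) * (Pi1 * mexp ((-s) • Aᵀ))) *ᵥ ((mexp (t • A))ᵀ *ᵥ y)) := by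
              rw [hqqdef, hxdef, mexp_transpose]
          _ = y ⬝ᵥ ((mexp (t • A) * (mexp ((-s) • A) * (Pi1 * mexp ((-s) • Aᵀ))) *
              (mexp (t • A))ᵀ) *ᵥ y) := (dot_conj _ _ _ _ _).symm
          _ = y ⬝ᵥ (f (t - s) *ᵥ y) := by rw [h2]
      calc (∫ v in (0:ℝ)..t, qq v) = ∫ v in (0:ℝ)..t, y ⬝ᵥ (f (t - v) *ᵥ y) := by
            simp only [hqr]
        _ = ∫ v in (t - t)..(t - 0), y ⬝ᵥ (f v *ᵥ y) :=
            intervalIntegral.integral_comp_sub_left (fun v => y ⬝ᵥ (f v *ᵥ y)) t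
        _ = ∫ v in (0:ℝ)..t, y ⬝ᵥ (f v *ᵥ y) := by rw [sub_self, sub_zero]
        _ = y ⬝ᵥ (mInt 0 t f *ᵥ y) := (quad_mInt hfc y).symm
    constructor
    · rw [← hgt, ← hg0]; exact hlow
    · rw [← hgt, ← hg0, ← hint]; linarith
  -- symmetry facts
  have hEXEsym : ∀ t : ℝ, (mexp (t • A) * X₀ * mexp (t • Aᵀ))ᵀ =
      mexp (t • A) * X₀ * mexp (t • Aᵀ) := by
    intro t
    rw [Matrix.transpose_mul, Matrix.transpose_mul, ← mexp_transpose,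
      Matrix.transpose_transpose, psd_transpose_eq hX₀, mexp_transpose, ← Matrix.mul_assoc]
  have hmIntsym : ∀ t : ℝ, (mInt 0 t f)ᵀ = mInt 0 t f := by
    intro t
    ext i j
    have h1 : ∀ u, f u j i = f u i j := fun u => congrFun (congrFun (hfsym u) i) j
    simp only [Matrix.transpose_apply, mInt, Matrix.of_apply]
    simp only [h1]
  have third : ∀ t ∈ Set.Icc (0:ℝ) T,
      (F t - mexp (t • A) * X₀ * mexp (t • Aᵀ)).PosSemidef := by
    intro t ht
    refine makePSD ?_ fun y => ?_
    · rw [Matrix.transpose_sub, hEXEsym, psd_transpose_eq (hFpsd t ht)]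
    · rw [quad_sub]
      have := (key t ht y).1
      linarith
  refine ⟨⟨0, Mc, le_refl 0, hMc0, fun t ht => ⟨?_, ?_⟩⟩, third⟩
  · rw [zero_smul, add_zero]
    exact third t ht
  · refine makePSD ?_ fun y => ?_
    · rw [Matrix.transpose_sub, Matrix.transpose_add, hEXEsym, Matrix.transpose_smul,
        hmIntsym, psd_transpose_eq (hFpsd t ht)]
    · rw [quad_sub, quad_add, quad_smul]
      have := (key t ht y).2
      linarith
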